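/- arXiv:0803.1290 — 2 statements merged into one kernel-verified Lean document; each statement's English description precedes it below -/
import Mathlib

section
/- Let k₁ ≠ k₂ be two nonzero real numbers, and suppose A ∈ O^{k₁}(4,ℝ) ∩ O^{k₂}(4,ℝ), i.e. Aᵀ diag(kᵢ,1,1,1) A = diag(kᵢ,1,1,1) for i = 1,2. Then A is block diagonal of the form A = diag(ε) ⊕ Q where ε = A₀₀ ∈ {1,-1}, the off-diagonal blocks vanish (A₀ⱼ = 0 = Aⱼ₀ for j ∈ {1,2,3}), and the spatial 3×3 block Q = (Aᵢⱼ)_{i,j∈{1,2,3}} satisfies Qᵀ Q = I₃ (i.e. Q ∈ O(3)). -/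
open Matrix

/-- `I₄^[k] = diag(k,1,1,1)`. -/
noncomputable def I4 (k : ℝ) : Matrix (Fin 4) (Fin 4) ℝ :=
  Matrix.diagonal (fun i => if i = 0 then k else 1)

lemma fs0 (h : 0 < 3) : (Fin.succ (⟨0, h⟩ : Fin 3)) = (1 : Fin 4) := rfl
lemma fs1 (h : 1 < 3) : (Fin.succ (⟨1, h⟩ : Fin 3)) = (2 : Fin 4) := rfl
lemma fs2 (h : 2 < 3) : (Fin.succ (⟨2, h⟩ : Fin 3)) = (3 : Fin 4) := rfl

/-- if `A` lies in `O^{k₁}(4,ℝ) ∩ O^{k₂}(4,ℝ)` for distinct nonzero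
`k₁ ≠ k₂`, then `A` is block diagonal `diag(ε) ⊕ Q` with `ε = A₀₀ = ±1`,
vanishing off-diagonal blocks, and spatial block `Q ∈ O(3)`. -/


theorem stmt6 (k₁ k₂ : ℝ) (h₁ : k₁ ≠ 0) (h₂ : k₂ ≠ 0) (hne : k₁ ≠ k₂)
    (A : Matrix (Fin 4) (Fin 4) ℝ)
    (hA₁ : Aᵀ * I4 k₁ * A = I4 k₁) (hA₂ : Aᵀ * I4 k₂ * A = I4 k₂) :
    (A 0 0 = 1 ∨ A 0 0 = -1) ∧
    (∀ j : Fin 3, A 0 j.succ = 0 ∧ A j.succ 0 = 0) ∧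
    (Matrix.of fun i j : Fin 3 => A i.succ j.succ)ᵀ *
      (Matrix.of fun i j : Fin 3 => A i.succ j.succ) = 1 := by
  have hk : k₁ - k₂ ≠ 0 := sub_ne_zero.mpr hne
  have hdiff : Aᵀ * (I4 k₁ - I4 k₂) * A = I4 k₁ - I4 k₂ := by
    rw [Matrix.mul_sub, Matrix.sub_mul, hA₁, hA₂]
  have hd : ∀ i j : Fin 4, A 0 i * (k₁ - k₂) * A 0 j =
      (if i = j then if i = 0 then k₁ else 1 else 0) -
        if i = j then if i = 0 then k₂ else 1 else 0 := by
    intro i j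
    have h := congrFun (congrFun hdiff i) j
    simpa [I4, Matrix.mul_apply, Matrix.sub_apply, Matrix.diagonal_apply, Fin.sum_univ_four,
      Matrix.transpose_apply] using h
  have h00 : A 0 0 * A 0 0 = 1 := by
    have h := hd 0 0
    simp at h
    have h2 : (k₁ - k₂) * (A 0 0 * A 0 0) = (k₁ - k₂) * 1 := by linear_combination h
    exact mul_left_cancel₀ hk h2
  have h00ne : A 0 0 ≠ 0 := by
    intro h; rw [h] at h00; simp at h00
  have h0j : ∀ j : Fin 4, j ≠ 0 → A 0 j = 0 := by
    intro j hj
    have h := hd 0 j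
    rw [if_neg (fun h => hj h.symm), if_neg (fun h => hj h.symm), sub_zero] at h
    rcases mul_eq_zero.mp h with h | h
    · rcases mul_eq_zero.mp h with h | h
      · exact absurd h h00ne
      · exact absurd h hk
    · exact h
  have he : ∀ i j : Fin 4,
      A 0 i * k₁ * A 0 j + (A 1 i * A 1 j + A 2 i * A 2 j + A 3 i * A 3 j) =
        if i = j then if i = 0 then k₁ else 1 else 0 := by
    intro i j
    have h := congrFun (congrFun hA₁ i) j
    simp [I4, Matrix.mul_apply, Matrix.diagonal_apply, Fin.sum_univ_four,
      Matrix.transpose_apply] at h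
    linarith [h]
  have hE : ∀ c d : Fin 4, c ≠ 0 →
      A 1 c * A 1 d + A 2 c * A 2 d + A 3 c * A 3 d = if c = d then 1 else 0 := by
    intro c d hc
    have h := he c d
    rw [h0j c hc, if_neg hc] at h
    simpa using h
  set Q : Matrix (Fin 3) (Fin 3) ℝ := Matrix.of fun i j : Fin 3 => A i.succ j.succ with hQ
  have hsucc : ∀ j : Fin 3, (j.succ : Fin 4) ≠ 0 := fun j => Fin.succ_ne_zero j
  have hQtQ : Qᵀ * Q = 1 := by
    ext i j
    simp only [Matrix.mul_apply, Fin.sum_univ_three, hQ, Matrix.transpose_apply,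
      Matrix.of_apply, Matrix.one_apply]
    fin_cases i <;> fin_cases j <;>
      simp only [fs0, fs1, fs2, Fin.mk.injEq, show (1:ℕ) ≠ 2 by decide, show (2:ℕ) ≠ 1 by decide,
        show (0:ℕ) ≠ 1 by decide, show (1:ℕ) ≠ 0 by decide, show (0:ℕ) ≠ 2 by decide,
        show (2:ℕ) ≠ 0 by decide, if_true, if_false] <;>
      · first
        | simpa using hE 1 1 (by decide)
        | simpa using hE 1 2 (by decide)
        | simpa using hE 1 3 (by decide)
        | simpa using hE 2 1 (by decide)
        | simpa using hE 2 2 (by decide)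
        | simpa using hE 2 3 (by decide)
        | simpa using hE 3 1 (by decide)
        | simpa using hE 3 2 (by decide)
        | simpa using hE 3 3 (by decide)
  have hQQt : Q * Qᵀ = 1 := mul_eq_one_comm.mp hQtQ
  have hv : Qᵀ.mulVec (fun m => A m.succ 0) = 0 := by
    ext m
    simp only [Matrix.mulVec, dotProduct, Fin.sum_univ_three, hQ,
      Matrix.transpose_apply, Matrix.of_apply, Pi.zero_apply]
    fin_cases m <;> simp only [fs0, fs1, fs2] <;>
      first
      | simpa using hE 1 0 (by decide)
      | simpa using hE 2 0 (by decide)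
      | simpa using hE 3 0 (by decide)
  have hj0 : ∀ j : Fin 3, A j.succ 0 = 0 := by
    have h0 : (fun m : Fin 3 => A m.succ 0) = 0 := by
      calc (fun m : Fin 3 => A m.succ 0)
          = (Q * Qᵀ).mulVec (fun m => A m.succ 0) := by rw [hQQt, Matrix.one_mulVec]
        _ = Q.mulVec (Qᵀ.mulVec (fun m => A m.succ 0)) := by rw [← Matrix.mulVec_mulVec]
        _ = 0 := by rw [hv, Matrix.mulVec_zero]
    exact fun j => congrFun h0 j
  exact ⟨mul_self_eq_one_iff.mp h00, fun j => ⟨h0j j.succ (hsucc j), hj0 j⟩, hQtQ⟩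
end

section
/- Let A be a real 4×4 matrix with (det A)² = 1 satisfying Aᵀ I₄^[0] A = I₄^[0], where I₄^[0] = diag(0,1,1,1). Then: (i) Aᵢ₀ = 0 for all spatial indices i ∈ {1,2,3}; (ii) the spatial 3×3 block Q = (Aᵢⱼ)_{i,j∈{1,2,3}} satisfies Qᵀ Q = I₃; and (iii) A₀₀ ∈ {1,-1}. Conversely, every matrix of the block form A = [[ε, aₕ],[0, Q]] with ε ∈ {1,-1}, aₕ an arbitrary row 3-vector, and Q ∈ O(3), satisfies Aᵀ I₄^[0] A = I₄^[0] and (det A)² = 1. -/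
open Matrix

private lemma succ0 : (0 : Fin 3).succ = (1 : Fin 4) := rfl
private lemma succ1 : (1 : Fin 3).succ = (2 : Fin 4) := rfl
private lemma succ2 : (2 : Fin 3).succ = (3 : Fin 4) := rfl

private lemma det_block (A : Matrix (Fin 4) (Fin 4) ℝ)
    (h1 : A 1 0 = 0) (h2 : A 2 0 = 0) (h3 : A 3 0 = 0) :
    A.det = A 0 0 * (Matrix.of fun i j : Fin 3 => A i.succ j.succ).det := by
  rw [Matrix.det_succ_column_zero]
  have : (Matrix.of fun i j : Fin 3 => A i.succ j.succ) = A.submatrix Fin.succ Fin.succ := rfl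
  simp [Fin.sum_univ_four, h1, h2, h3, this]

private lemma detsq (Q : Matrix (Fin 3) (Fin 3) ℝ) (h : Qᵀ * Q = 1) : Q.det ^ 2 = 1 := by
  have := congrArg Matrix.det h
  rwa [Matrix.det_mul, Matrix.det_transpose, Matrix.det_one, ← pow_two] at this

/-- characterization of the group `O^0(4,ℝ)` (`k = 0`,
anti-Leibnizian case): `A` with `det²A = 1` and `Aᵀ I₄^[0] A = I₄^[0]` has
vanishing spatial components in its first column, orthogonal spatial block, and
`A₀₀ = ±1`; conversely any matrix of the block form `[[ε, aₕ],[0, Q]]` with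
`ε = ±1` and `Q ∈ O(3)` satisfies both conditions. -/
theorem stmt7 :
    (∀ A : Matrix (Fin 4) (Fin 4) ℝ, A.det ^ 2 = 1 → Aᵀ * I4 0 * A = I4 0 →
      (∀ i : Fin 3, A i.succ 0 = 0) ∧
      (Matrix.of fun i j : Fin 3 => A i.succ j.succ)ᵀ *
        (Matrix.of fun i j : Fin 3 => A i.succ j.succ) = 1 ∧
      (A 0 0 = 1 ∨ A 0 0 = -1)) ∧
    (∀ A : Matrix (Fin 4) (Fin 4) ℝ,
      (A 0 0 = 1 ∨ A 0 0 = -1) →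
      (∀ i : Fin 3, A i.succ 0 = 0) →
      (Matrix.of fun i j : Fin 3 => A i.succ j.succ)ᵀ *
        (Matrix.of fun i j : Fin 3 => A i.succ j.succ) = 1 →
      Aᵀ * I4 0 * A = I4 0 ∧ A.det ^ 2 = 1) := by
  constructor
  · intro A hdet hA
    have h00 := congrFun (congrFun hA 0) 0
    simp [I4, Matrix.mul_apply, Matrix.diagonal, Fin.sum_univ_four] at h00
    have z1 : A 1 0 = 0 := by nlinarith [sq_nonneg (A 1 0), sq_nonneg (A 2 0), sq_nonneg (A 3 0)]
    have z2 : A 2 0 = 0 := by nlinarith [sq_nonneg (A 1 0), sq_nonneg (A 2 0), sq_nonneg (A 3 0)]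
    have z3 : A 3 0 = 0 := by nlinarith [sq_nonneg (A 1 0), sq_nonneg (A 2 0), sq_nonneg (A 3 0)]
    have hz : ∀ i : Fin 3, A i.succ 0 = 0 := by
      intro i; fin_cases i <;> assumption
    have hQ : (Matrix.of fun i j : Fin 3 => A i.succ j.succ)ᵀ *
        (Matrix.of fun i j : Fin 3 => A i.succ j.succ) = 1 := by
      ext i j
      have h := congrFun (congrFun hA i.succ) j.succ
      fin_cases i <;> fin_cases j <;>
        simp [I4, Matrix.mul_apply, Matrix.diagonal, Fin.sum_univ_four,
          Fin.sum_univ_three, Matrix.one_apply, succ0, succ1, succ2] at h ⊢ <;> linarith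
    refine ⟨hz, hQ, ?_⟩
    have hdQ := detsq _ hQ
    rw [det_block A z1 z2 z3, mul_pow, hdQ, mul_one, pow_two] at hdet
    exact mul_self_eq_one_iff.mp hdet
  · intro A heps hz hQ
    have z1 : A 1 0 = 0 := hz 0
    have z2 : A 2 0 = 0 := hz 1
    have z3 : A 3 0 = 0 := hz 2
    have q : ∀ i j : Fin 3, A 1 i.succ * A 1 j.succ + A 2 i.succ * A 2 j.succ
        + A 3 i.succ * A 3 j.succ = if i = j then 1 else 0 := by
      intro i j
      have h := congrFun (congrFun hQ i) j
      simp [Matrix.mul_apply, Fin.sum_univ_three, Matrix.one_apply,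
        succ0, succ1, succ2] at h
      split <;> rename_i hij
      · subst hij; simpa using h
      · simpa [hij] using h
    have q00 := (q 0 0).trans (if_pos rfl)
    have q01 := (q 0 1).trans (if_neg (by decide))
    have q02 := (q 0 2).trans (if_neg (by decide))
    have q10 := (q 1 0).trans (if_neg (by decide))
    have q11 := (q 1 1).trans (if_pos rfl)
    have q12 := (q 1 2).trans (if_neg (by decide))
    have q20 := (q 2 0).trans (if_neg (by decide))
    have q21 := (q 2 1).trans (if_neg (by decide))
    have q22 := (q 2 2).trans (if_pos rfl)
    simp only [succ0, succ1, succ2] at q00 q01 q02 q10 q11 q12 q20 q21 q22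
    refine ⟨?_, ?_⟩
    · ext i j
      fin_cases i <;> fin_cases j <;>
        simp [I4, Matrix.mul_apply, Matrix.diagonal, Fin.sum_univ_four, z1, z2, z3] <;>
        linarith [q00, q01, q02, q10, q11, q12, q20, q21, q22]
    · have hdQ := detsq _ hQ
      rcases heps with h | h <;>
        rw [det_block A z1 z2 z3, mul_pow, hdQ, mul_one, h] <;> norm_num
end
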